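/- Let k be a field and S = S_uni the k-algebra generated by x₀, x₁, x₂, … with relations xₙ xₙ₊₁ = 0. Then the bounded below complex of free left S-modules with one generator, 0 → S →(·x₀) S →(·x₁) S →(·x₂) S → ⋯, where each differential is right multiplication by xₙ, is acyclic. -/

import Mathlib

universe u

/-- The defining relations of the universal algebra `S_uni`: `xₙ xₙ₊₁ = 0` for all `n ≥ 0`. -/
def SuniRel (k : Type u) [Field k] : FreeAlgebra k ℕ → FreeAlgebra k ℕ → Prop :=
  fun a b => ∃ n : ℕ, a = FreeAlgebra.ι k n * FreeAlgebra.ι k (n + 1) ∧ b = 0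

/-- The `k`-algebra `S_uni` generated by elements `x₀, x₁, x₂, …` subject only to the
relations `xₙ xₙ₊₁ = 0` for all `n ≥ 0`. -/
abbrev Suni (k : Type u) [Field k] : Type u := RingQuot (SuniRel k)

/-- The generator `xₙ` of `S_uni`. -/
noncomputable def xgen (k : Type u) [Field k] (n : ℕ) : Suni k :=
  RingQuot.mkAlgHom k (SuniRel k) (FreeAlgebra.ι k n)

namespace SuniAux

open Finsupp

variable (k : Type u) [Field k]

/-- The monoid algebra model of the free algebra. -/
abbrev M : Type u := MonoidAlgebra k (FreeMonoid ℕ)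

/-- A word is good if it never has `n` immediately followed by `n+1`. -/
def Good (w : FreeMonoid ℕ) : Prop :=
  (FreeMonoid.toList w).Chain' (fun a b => b ≠ a + 1)

instance : DecidablePred Good := fun w =>
  inferInstanceAs (Decidable ((FreeMonoid.toList w).IsChain (fun a b => b ≠ a + 1)))

lemma good_of_mul_left {w v : FreeMonoid ℕ} (h : Good (w * v)) : Good w :=
  List.IsChain.prefix h (List.prefix_append _ _)

lemma good_of_mul_right {w v : FreeMonoid ℕ} (h : Good (w * v)) : Good v :=
  List.IsChain.suffix h (List.suffix_append _ _)

/-- The span of bad words. -/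
noncomputable def J : Submodule k (M k) := (Finsupp.supported k k {w | ¬ Good w}).comap
  (MonoidAlgebra.coeffLinearEquiv k).toLinearMap

lemma mem_J {f : M k} : f ∈ J k ↔ ∀ w ∈ f.coeff.support, ¬ Good w := by
  rw [J, Submodule.mem_comap, Finsupp.mem_supported]
  exact Iff.rfl

lemma J_mul_right {f : M k} (hf : f ∈ J k) (c : M k) : f * c ∈ J k := by
  classical
  rw [mem_J] at hf ⊢
  intro w hw
  have h := MonoidAlgebra.support_coeff_mul_subset f c hw
  rw [Finset.mem_mul] at h
  obtain ⟨a, ha, b, _, rfl⟩ := h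
  exact fun hg => hf a ha (good_of_mul_left hg)

lemma J_mul_left {f : M k} (hf : f ∈ J k) (c : M k) : c * f ∈ J k := by
  classical
  rw [mem_J] at hf ⊢
  intro w hw
  have h := MonoidAlgebra.support_coeff_mul_subset c f hw
  rw [Finset.mem_mul] at h
  obtain ⟨a, _, b, hb, rfl⟩ := h
  exact fun hg => hf b hb (good_of_mul_right hg)

/-- Evaluation of the monoid algebra into `Suni k`. -/
noncomputable def piM : M k →ₐ[k] Suni k :=
  MonoidAlgebra.lift k (Suni k) (FreeMonoid ℕ) (FreeMonoid.lift (xgen k))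

lemma piM_single (w : FreeMonoid ℕ) :
    piM k (MonoidAlgebra.single w (1 : k)) = ((FreeMonoid.toList w).map (xgen k)).prod := by
  rw [piM, MonoidAlgebra.lift_single, one_smul, FreeMonoid.lift_apply]

lemma xmul (n : ℕ) : xgen k n * xgen k (n + 1) = 0 := by
  have h : RingQuot.mkAlgHom k (SuniRel k) (FreeAlgebra.ι k n * FreeAlgebra.ι k (n + 1)) =
      RingQuot.mkAlgHom k (SuniRel k) 0 := RingQuot.mkAlgHom_rel k ⟨n, rfl, rfl⟩
  simpa [xgen, map_mul] using h

lemma prod_bad_eq_zero {l : List ℕ} (h : ¬ l.Chain' (fun a b => b ≠ a + 1)) :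
    (l.map (xgen k)).prod = 0 := by
  induction l with
  | nil => simp [List.Chain'] at h
  | cons a t ih =>
    cases t with
    | nil => simp [List.Chain'] at h
    | cons b t' =>
      by_cases hb : b = a + 1
      · subst hb
        have := xmul k a
        simp only [List.map_cons, List.prod_cons, ← mul_assoc, this, zero_mul]
      · have h' : ¬ (b :: t').Chain' (fun a b => b ≠ a + 1) := by
          intro hc
          exact h (List.isChain_cons_cons.2 ⟨hb, hc⟩)
        have hstep : (List.map (xgen k) (a :: b :: t')).prod =
            xgen k a * (List.map (xgen k) (b :: t')).prod := by simp
        rw [hstep, ih h', mul_zero]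

lemma piM_eq_zero_of_mem_J {f : M k} (hf : f ∈ J k) : piM k f = 0 := by
  rw [mem_J] at hf
  conv_lhs => rw [← MonoidAlgebra.sum_coeff_single f]
  rw [map_finsuppSum, Finsupp.sum]
  refine Finset.sum_eq_zero fun w hw => ?_
  show piM k (MonoidAlgebra.single w (f.coeff w)) = 0
  have h1 : (MonoidAlgebra.single w (f.coeff w) : M k) = f.coeff w • MonoidAlgebra.single w (1 : k) := by
    rw [MonoidAlgebra.smul_single', mul_one]
  rw [h1, map_smul, piM_single, prod_bad_eq_zero k (hf w hw), smul_zero]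

/-- Abbreviation for the equivalence between the free algebra and the monoid algebra. -/
noncomputable abbrev E : FreeAlgebra k ℕ ≃ₐ[k] M k :=
  FreeAlgebra.equivMonoidAlgebraFreeMonoid

lemma E_iota (n : ℕ) :
    E k (FreeAlgebra.ι k n) = MonoidAlgebra.single (FreeMonoid.of n) (1 : k) := by
  rw [E, FreeAlgebra.equivMonoidAlgebraFreeMonoid]
  simp [FreeAlgebra.lift_ι_apply, MonoidAlgebra.of_apply]

lemma piM_E (f : FreeAlgebra k ℕ) :
    piM k (E k f) = RingQuot.mkAlgHom k (SuniRel k) f := by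
  have h : (piM k).comp (E k : FreeAlgebra k ℕ →ₐ[k] M k) =
      RingQuot.mkAlgHom k (SuniRel k) := by
    apply FreeAlgebra.hom_ext
    funext n
    show piM k (E k (FreeAlgebra.ι k n)) = _
    rw [E_iota, piM_single]
    simp [xgen]
  simpa using AlgHom.congr_fun h f

lemma mem_J_of_eqv {a b : FreeAlgebra k ℕ}
    (h : Relation.EqvGen (RingQuot.Rel (SuniRel k)) a b) : E k a - E k b ∈ J k := by
  induction h with
  | rel x y hxy =>
    induction hxy with
    | of h =>
      obtain ⟨n, rfl, rfl⟩ := h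
      rw [map_zero, sub_zero, map_mul, E_iota, E_iota, MonoidAlgebra.single_mul_single, one_mul]
      rw [mem_J]
      intro w hw
      have hw' : w = FreeMonoid.of n * FreeMonoid.of (n + 1) := by
        simpa using Finsupp.support_single_subset hw
      subst hw'
      simp [Good, List.Chain', List.isChain_cons_cons]
    | add_left h ih => simpa [map_add, add_sub_add_right_eq_sub] using ih
    | mul_left h ih =>
      rw [map_mul, map_mul, ← sub_mul]
      exact J_mul_right k ih _
    | mul_right h ih =>
      rw [map_mul, map_mul, ← mul_sub]
      exact J_mul_left k ih _
  | refl x => simp only [sub_self]; exact (J k).zero_mem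
  | symm x y _ ih =>
    rw [← neg_sub]
    exact (J k).neg_mem ih
  | trans x y z _ _ ih1 ih2 =>
    have := (J k).add_mem ih1 ih2
    simpa [sub_add_sub_cancel] using this

lemma eqv_of_eq {a b : FreeAlgebra k ℕ}
    (h : RingQuot.mkAlgHom k (SuniRel k) a = RingQuot.mkAlgHom k (SuniRel k) b) :
    Relation.EqvGen (RingQuot.Rel (SuniRel k)) a b := by
  have h' : RingQuot.mkRingHom (SuniRel k) a = RingQuot.mkRingHom (SuniRel k) b := by
    rw [← RingQuot.mkAlgHom_coe k]
    exact h
  rw [RingQuot.mkRingHom_def] at h'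
  simp only [RingHom.coe_mk, MonoidHom.coe_mk, OneHom.coe_mk] at h'
  exact Quot.eqvGen_exact (congrArg RingQuot.toQuot h')

lemma mem_J_of_piM_eq_zero {f : M k} (h : piM k f = 0) : f ∈ J k := by
  have h0 : RingQuot.mkAlgHom k (SuniRel k) ((E k).symm f) =
      RingQuot.mkAlgHom k (SuniRel k) 0 := by
    rw [map_zero, ← piM_E, (E k).apply_symm_apply]
    exact h
  have hm := mem_J_of_eqv k (eqv_of_eq k h0)
  rwa [map_zero, sub_zero, (E k).apply_symm_apply] at hm

lemma eq_zero_of_good_of_piM_eq_zero {f : M k} (good : ∀ w ∈ f.coeff.support, Good w)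
    (h : piM k f = 0) : f = 0 := by
  have hJ := mem_J_of_piM_eq_zero k h
  rw [mem_J] at hJ
  ext w
  by_cases hw : w ∈ f.coeff.support
  · exact absurd (good w hw) (hJ w hw)
  · simpa using Finsupp.notMem_support_iff.1 hw

lemma exists_good_rep (s : Suni k) :
    ∃ f : M k, (∀ w ∈ f.coeff.support, Good w) ∧ piM k f = s := by
  obtain ⟨a, rfl⟩ := RingQuot.mkAlgHom_surjective k (SuniRel k) s
  classical
  refine ⟨MonoidAlgebra.ofCoeff ((E k a).coeff.filter Good), ?_, ?_⟩
  · intro w hw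
    rw [Finsupp.support_filter, Finset.mem_filter] at hw
    exact hw.2
  · have hsplit : MonoidAlgebra.ofCoeff ((E k a).coeff.filter Good) +
        MonoidAlgebra.ofCoeff ((E k a).coeff.filter (fun w => ¬ Good w)) = E k a := by
      rw [← MonoidAlgebra.ofCoeff_add, Finsupp.filter_pos_add_filter_neg,
        MonoidAlgebra.ofCoeff_coeff]
    have hbad : piM k (MonoidAlgebra.ofCoeff ((E k a).coeff.filter (fun w => ¬ Good w))) = 0 := by
      apply piM_eq_zero_of_mem_J
      rw [mem_J]
      intro w hw
      rw [Finsupp.support_filter, Finset.mem_filter] at hw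
      exact hw.2
    have := congrArg (piM k) hsplit
    rw [map_add, hbad, add_zero] at this
    rw [this, piM_E]

lemma mul_single_eq (f : M k) (a : FreeMonoid ℕ) :
    f * MonoidAlgebra.single a (1 : k) = MonoidAlgebra.mapDomain (· * a) f := by
  rw [MonoidAlgebra.mul_def, MonoidAlgebra.mapDomain, Finsupp.mapDomain,
    MonoidAlgebra.ofCoeff_finsuppSum]
  refine Finsupp.sum_congr fun w _ => ?_
  rw [MonoidAlgebra.coeff_single, Finsupp.sum_single_index] <;> simp

lemma piM_single_of (n : ℕ) :
    piM k (MonoidAlgebra.single (FreeMonoid.of n) (1 : k)) = xgen k n := by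
  rw [piM_single]
  simp

end SuniAux

/-- The complex `0 → S → S → S → ⋯` of free left `S_uni`-modules with one generator, with
differentials given by right multiplication by `x₀, x₁, x₂, …`, is acyclic. -/
theorem suni_complex_acyclic (k : Type u) [Field k] :
    Function.Injective (fun s : Suni k => s * xgen k 0) ∧
    (∀ n : ℕ, ∀ s : Suni k, (s * xgen k n) * xgen k (n + 1) = 0) ∧
    (∀ n : ℕ, Function.Exact (fun s : Suni k => s * xgen k n)
      (fun s : Suni k => s * xgen k (n + 1))) := by
  classical
  open SuniAux in
  -- Part 2: the differentials compose to zero.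
  have part2 : ∀ n : ℕ, ∀ s : Suni k, (s * xgen k n) * xgen k (n + 1) = 0 := by
    intro n s
    rw [mul_assoc, SuniAux.xmul, mul_zero]
  -- Injectivity at the start: appending `x₀` never creates a forbidden pair.
  have inj0 : ∀ s : Suni k, s * xgen k 0 = 0 → s = 0 := by
    intro s hs
    obtain ⟨f, good, hf⟩ := exists_good_rep k s
    have h0 : piM k (f * MonoidAlgebra.single (FreeMonoid.of 0) (1 : k)) = 0 := by
      rw [map_mul, piM_single_of, hf, hs]
    have good' : ∀ w ∈ (f * MonoidAlgebra.single (FreeMonoid.of 0) (1 : k)).coeff.support,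
        Good w := by
      rw [mul_single_eq]
      intro w hw
      have hw' := Finsupp.mapDomain_support hw
      rw [Finset.mem_image] at hw'
      obtain ⟨v, hv, rfl⟩ := hw'
      have hgv := good v hv
      rw [Good, FreeMonoid.toList_mul, List.Chain', List.isChain_append]
      refine ⟨hgv, by simp [Good], ?_⟩
      intro x _ y hy
      simp only [FreeMonoid.toList_of, List.head?_cons, Option.mem_def,
        Option.some.injEq] at hy
      omega
    have hzero := eq_zero_of_good_of_piM_eq_zero k good' h0
    rw [mul_single_eq] at hzero
    have hfz : f = 0 :=
      MonoidAlgebra.mapDomain_injective (mul_left_injective (FreeMonoid.of 0)) (by simpa using hzero)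
    rw [← hf, hfz, map_zero]
  refine ⟨?_, part2, ?_⟩
  · intro s t hst
    simp only at hst
    have : (s - t) * xgen k 0 = 0 := by rw [sub_mul, hst, sub_self]
    have := inj0 _ this
    exact sub_eq_zero.1 this
  · intro n y
    constructor
    · intro hy
      simp only at hy
      obtain ⟨f, good, hf⟩ := exists_good_rep k y
      have h0 : piM k (f * MonoidAlgebra.single (FreeMonoid.of (n + 1)) (1 : k)) = 0 := by
        rw [map_mul, piM_single_of, hf, hy]
      have hJ := mem_J_of_piM_eq_zero k h0
      rw [mul_single_eq, mem_J] at hJ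
      -- every word in the support of `f` ends with `n`
      have ends : ∀ w ∈ f.coeff.support, (FreeMonoid.toList w).getLast? = some n := by
        intro w hw
        have hmem : w * FreeMonoid.of (n + 1) ∈
            (MonoidAlgebra.mapDomain (· * FreeMonoid.of (n + 1)) f).coeff.support := by
          show _ ∈ (Finsupp.mapDomain (· * FreeMonoid.of (n + 1)) f.coeff).support
          rw [Finsupp.mapDomain_support_of_injective (mul_left_injective _)]
          exact Finset.mem_image_of_mem _ hw
        have hbad := hJ _ hmem
        rw [Good, FreeMonoid.toList_mul, List.Chain', List.isChain_append] at hbad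
        push_neg at hbad
        obtain ⟨x, hx, y', hy', hxy⟩ := hbad (good w hw) (by simp [Good])
        simp only [FreeMonoid.toList_of, List.head?_cons, Option.mem_def,
          Option.some.injEq] at hy'
        have hxn : x = n := by omega
        rw [← hxn]
        exact hx
      -- drop the last letter of every word in the support
      set g : SuniAux.M k :=
          MonoidAlgebra.mapDomain (fun w => FreeMonoid.ofList (FreeMonoid.toList w).dropLast) f with hg
      have hgf : MonoidAlgebra.mapDomain (· * FreeMonoid.of n) g = f := by
        apply MonoidAlgebra.coeff_injective
        show Finsupp.mapDomain _ (Finsupp.mapDomain _ f.coeff) = f.coeff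
        rw [← Finsupp.mapDomain_comp]
        have hcong : ∀ w ∈ f.coeff.support,
            ((· * FreeMonoid.of n) ∘ fun w => FreeMonoid.ofList (FreeMonoid.toList w).dropLast) w
              = id w := by
          intro w hw
          have hlast := ends w hw
          have hdrop : (FreeMonoid.toList w).dropLast ++ [n] = FreeMonoid.toList w :=
            List.dropLast_append_getLast? n hlast
          show FreeMonoid.ofList (FreeMonoid.toList w).dropLast * FreeMonoid.of n = w
          have : FreeMonoid.ofList ((FreeMonoid.toList w).dropLast ++ [n]) =
              FreeMonoid.ofList (FreeMonoid.toList w).dropLast * FreeMonoid.of n :=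
            FreeMonoid.ofList_append _ _
          rw [← this, hdrop, FreeMonoid.ofList_toList]
        rw [Finsupp.mapDomain_congr hcong, Finsupp.mapDomain_id]
      refine ⟨piM k g, ?_⟩
      show piM k g * xgen k n = y
      rw [← piM_single_of k n, ← map_mul, mul_single_eq, hgf, hf]
    · rintro ⟨t, rfl⟩
      exact part2 n t
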